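/- An amalgamated free product of two finite groups over a common subgroup is residually finite. -/

import Mathlib

open Monoid

open Monoid Subgroup Function

namespace AmalgamRF

attribute [local instance] Classical.propDecidable

variable {H : Bool → Type*} [∀ b, Group (H b)] {C : Type*} [Group C]
  {φ : ∀ b : Bool, C →* H b}

section Dec

variable (d : Monoid.PushoutI.NormalWord.Transversal φ)

/-- untangle set-coercion vs subgroup subtype -/
noncomputable def decCofRange (b : Bool) (x : ((φ b).range : Set (H b))) : C :=
  (MonoidHom.ofInjective (d.injective b)).symm ⟨x.1, x.2⟩

theorem decCofRange_phi (b : Bool) (c : C) (hm : φ b c ∈ ((φ b).range : Set (H b))) :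
    decCofRange d b ⟨φ b c, hm⟩ = c := by
  rw [decCofRange, MulEquiv.symm_apply_eq]
  exact Subtype.ext (MonoidHom.ofInjective_apply (d.injective b)).symm

/-- The `C`-component of the decomposition `h = φ c * t`. -/
noncomputable def decC (b : Bool) (h : H b) : C :=
  decCofRange d b ((d.compl b).equiv h).1

/-- The transversal component of the decomposition `h = φ c * t`. -/
noncomputable def decT (b : Bool) (h : H b) : d.set b :=
  ((d.compl b).equiv h).2

theorem dec_spec (b : Bool) (h : H b) :
    φ b (decC d b h) * (decT d b h : H b) = h := by
  rw [decC, decCofRange, MonoidHom.apply_ofInjective_symm]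
  exact (d.compl b).equiv_fst_mul_equiv_snd h

theorem dec_unique (b : Bool) (c' : C) (t : d.set b) (h : H b)
    (hh : φ b c' * (t : H b) = h) : decC d b h = c' ∧ decT d b h = t := by
  have key : (d.compl b).equiv h = (⟨φ b c', ⟨c', rfl⟩⟩, t) := by
    rw [Equiv.apply_eq_iff_eq_symm_apply, Subgroup.IsComplement.equiv_symm_apply]
    exact hh.symm
  constructor
  · rw [decC, key]
    exact decCofRange_phi d b c' _
  · rw [decT, key]

theorem decC_phi_mul (b : Bool) (c : C) (h : H b) :
    decC d b (φ b c * h) = c * decC d b h :=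
  (dec_unique d b (c * decC d b h) (decT d b h) _
    (by rw [map_mul, mul_assoc, dec_spec])).1

theorem decT_phi_mul (b : Bool) (c : C) (h : H b) :
    decT d b (φ b c * h) = decT d b h :=
  (dec_unique d b (c * decC d b h) (decT d b h) _
    (by rw [map_mul, mul_assoc, dec_spec])).2

theorem decC_phi_t (b : Bool) (c : C) (t : d.set b) : decC d b (φ b c * t) = c :=
  (dec_unique d b c t _ rfl).1

theorem decT_phi_t (b : Bool) (c : C) (t : d.set b) : decT d b (φ b c * t) = t :=
  (dec_unique d b c t _ rfl).2

theorem decT_ne_one (b : Bool) (g : H b) (c : C) (hg : g ∉ (φ b).range) :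
    ((decT d b (g * φ b c) : H b)) ≠ 1 := by
  intro h1
  rw [decT] at h1
  have := ((d.compl b).coe_equiv_snd_eq_one_iff_mem (d.one_mem b)).1 h1
  rcases this with ⟨c', hc'⟩
  exact hg ⟨c' * c⁻¹, by rw [map_mul, map_inv, hc']; group⟩

theorem set_notin_range (b : Bool) (g : H b) (hm : g ∈ d.set b) (hne : g ≠ 1) :
    g ∉ (φ b).range := by
  intro hr
  have h1 : ((d.compl b).equiv g).2 = ⟨g, hm⟩ :=
    (d.compl b).equiv_snd_eq_self_of_mem_of_one_mem ((φ b).range.one_mem) hm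
  have h2 : (((d.compl b).equiv g).2 : H b) = 1 :=
    ((d.compl b).coe_equiv_snd_eq_one_iff_mem (d.one_mem b)).2 hr
  rw [h1] at h2
  exact hne h2

end Dec

theorem mem_of_getElem?' {α : Type*} {l : List α} {n : ℕ} {a : α} (h : l[n]? = some a) :
    a ∈ l := by
  obtain ⟨h1, h2⟩ := List.getElem?_eq_some_iff.1 h
  exact h2 ▸ List.getElem_mem h1

section Word

variable (d : Monoid.PushoutI.NormalWord.Transversal φ) (ℓ : List (Σ b : Bool, H b))

/-- heads computed by processing a word from the right, starting at 1 -/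
noncomputable def Fhd : List (Σ b : Bool, H b) → C
  | [] => 1
  | p :: r => decC d p.1 (p.2 * φ p.1 (Fhd r))

/-- head at position `k` -/
noncomputable def hd (k : ℕ) : C := Fhd d (ℓ.drop k)

theorem hd_length : hd d ℓ ℓ.length = 1 := by
  rw [hd, List.drop_length, Fhd]

/-- the letter at index `j` exists and has type `b` -/
def isT (j : ℕ) (b : Bool) : Prop := ∃ g : H b, ℓ[j]? = some ⟨b, g⟩

theorem isT_lt {j : ℕ} {b : Bool} (h : isT ℓ j b) : j < ℓ.length := by
  obtain ⟨g, hg⟩ := h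
  exact (List.getElem?_eq_some_iff.1 hg).1

/-- the label used in the block of letter `j` -/
noncomputable def lab (b : Bool) (j : ℕ) : d.set b :=
  if h : isT ℓ j b then decT d b (h.choose * φ b (hd d ℓ (j + 1)))
  else ⟨1, d.one_mem b⟩

theorem lab_eq {b : Bool} {j : ℕ} {g : H b} (hj : ℓ[j]? = some ⟨b, g⟩) :
    lab d ℓ b j = decT d b (g * φ b (hd d ℓ (j + 1))) := by
  have h : isT ℓ j b := ⟨g, hj⟩
  have hgg : g = h.choose := by
    have h2 := Option.some_injective _ (hj.symm.trans h.choose_spec)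
    exact eq_of_heq (Sigma.mk.inj_iff.1 h2).2
  rw [lab, dif_pos h, ← hgg]

theorem lab_ne_one (hR : ∀ (b : Bool) (g : H b), (⟨b, g⟩ : Σ b : Bool, H b) ∈ ℓ → g ∉ (φ b).range)
    {b : Bool} {j : ℕ} (h : isT ℓ j b) : ((lab d ℓ b j : H b)) ≠ 1 := by
  obtain ⟨g, hg⟩ := h
  rw [lab_eq d ℓ hg]
  exact decT_ne_one d b g _ (hR b g (mem_of_getElem?' hg))

theorem isT_not_succ (hchain : ℓ.Chain' fun l l' => l.fst ≠ l'.fst)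
    {b : Bool} {j : ℕ} (h : isT ℓ j b) : ¬ isT ℓ (j + 1) b := by
  rintro ⟨g', hg'⟩
  obtain ⟨g, hg⟩ := h
  obtain ⟨hlt', he'⟩ := List.getElem?_eq_some_iff.1 hg'
  obtain ⟨hlt, he⟩ := List.getElem?_eq_some_iff.1 hg
  have := List.isChain_iff_getElem.1 hchain j (by omega)
  simp only [he, he'] at this
  exact this rfl

end Word

section Blocks

variable (d : Monoid.PushoutI.NormalWord.Transversal φ) (ℓ : List (Σ b : Bool, H b))

/-- vector of labels, one for each side -/
@[reducible] def VT := ∀ b : Bool, d.set b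

noncomputable def ones : VT d := fun b => ⟨1, d.one_mem b⟩

noncomputable def upd (b : Bool) (t : d.set b) : VT d :=
  Function.update (ones d) b t

noncomputable def mk2 (b : Bool) (t : d.set b) (u : d.set (!b)) : VT d :=
  Function.update (upd d b t) (!b) u

theorem not_eq_self (b : Bool) : (!b) ≠ b := by cases b <;> simp

theorem vext {b : Bool} {v w : VT d} (h1 : v b = w b) (h2 : v (!b) = w (!b)) : v = w := by
  funext b'
  by_cases hb : b' = b
  · rwa [hb]
  · rw [Bool.eq_not_of_ne hb] at *
    exact h2

theorem upd_apply_b (b : Bool) (t : d.set b) : upd d b t b = t := by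
  rw [upd, Function.update_self]

theorem upd_apply_nb (b : Bool) (t : d.set b) : upd d b t (!b) = ⟨1, d.one_mem (!b)⟩ := by
  rw [upd, Function.update_of_ne (not_eq_self b)]; rfl

theorem mk2_apply_b (b : Bool) (t : d.set b) (u : d.set (!b)) : mk2 d b t u b = t := by
  rw [mk2, Function.update_of_ne (not_eq_self b).symm, upd_apply_b]

theorem mk2_apply_nb (b : Bool) (t : d.set b) (u : d.set (!b)) : mk2 d b t u (!b) = u := by
  rw [mk2, Function.update_self]

theorem mk2_one (b : Bool) (t : d.set b) :
    mk2 d b t ⟨1, d.one_mem (!b)⟩ = upd d b t := by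
  refine vext d (b := b) ?_ ?_
  · rw [mk2_apply_b, upd_apply_b]
  · rw [mk2_apply_nb, upd_apply_nb]

theorem upd_ne_ones {b : Bool} {t : d.set b} (ht : (t : H b) ≠ 1) : upd d b t ≠ ones d := by
  intro h
  have := congrFun h b
  rw [upd_apply_b] at this
  exact ht (by rw [this]; rfl)

theorem ones_apply (b : Bool) : ones d b = ⟨1, d.one_mem b⟩ := rfl

/-- the position set -/
@[reducible] def OO := Fin (ℓ.length + 1) × VT d

/-- the routing involution for side `b` -/
noncomputable def sigFun (b : Bool) : OO d ℓ → OO d ℓ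
  | (k, v) =>
    if h1 : v = ones d ∧ isT ℓ k.val b then
      (⟨k.val + 1, Nat.succ_lt_succ (isT_lt ℓ h1.2)⟩, upd d b (lab d ℓ b k.val))
    else if h2 : 0 < k.val ∧ isT ℓ (k.val - 1) b ∧ v = upd d b (lab d ℓ b (k.val - 1)) then
      (⟨k.val - 1, lt_trans (Nat.sub_lt h2.1 one_pos) k.isLt⟩, ones d)
    else (k, v)

theorem sig_invol (hR : ∀ (b : Bool) (g : H b), (⟨b, g⟩ : Σ b : Bool, H b) ∈ ℓ → g ∉ (φ b).range)
    (b : Bool) : Function.Involutive (sigFun d ℓ b) := by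
  intro p
  obtain ⟨k, v⟩ := p
  by_cases h1 : (v = ones d ∧ isT ℓ k.val b)
  · have hlab := lab_ne_one d ℓ hR h1.2
    have e1 : sigFun d ℓ b (k, v) =
        (⟨k.val + 1, Nat.succ_lt_succ (isT_lt ℓ h1.2)⟩, upd d b (lab d ℓ b k.val)) := by
      rw [sigFun, dif_pos h1]
    rw [e1, sigFun, dif_neg, dif_pos]
    · refine Prod.ext (Fin.ext ?_) h1.1.symm
      simp
    · refine ⟨Nat.succ_pos _, ?_, ?_⟩ <;> simp [h1.2]
    · rintro ⟨he, -⟩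
      exact upd_ne_ones d hlab he
  · have e1 : sigFun d ℓ b (k, v) = if h2 : 0 < k.val ∧ isT ℓ (k.val - 1) b ∧
        v = upd d b (lab d ℓ b (k.val - 1)) then
        (⟨k.val - 1, lt_trans (Nat.sub_lt h2.1 one_pos) k.isLt⟩, ones d)
      else (k, v) := by
      rw [sigFun, dif_neg h1]
    rw [e1]
    by_cases h2 : (0 < k.val ∧ isT ℓ (k.val - 1) b ∧ v = upd d b (lab d ℓ b (k.val - 1)))
    · rw [dif_pos h2, sigFun, dif_pos ⟨rfl, h2.2.1⟩]
      refine Prod.ext (Fin.ext ?_) h2.2.2.symm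
      simp only
      omega
    · rw [dif_neg h2, sigFun, dif_neg h1, dif_neg h2]

/-- the routing permutation -/
noncomputable def sig (hR : ∀ (b : Bool) (g : H b),
    (⟨b, g⟩ : Σ b : Bool, H b) ∈ ℓ → g ∉ (φ b).range) (b : Bool) : Equiv.Perm (OO d ℓ) :=
  ⟨sigFun d ℓ b, sigFun d ℓ b, sig_invol d ℓ hR b, sig_invol d ℓ hR b⟩

theorem sig_apply (hR : ∀ (b : Bool) (g : H b),
    (⟨b, g⟩ : Σ b : Bool, H b) ∈ ℓ → g ∉ (φ b).range) (b : Bool) (x : OO d ℓ) :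
    sig d ℓ hR b x = sigFun d ℓ b x := rfl

theorem sig_symm_apply (hR : ∀ (b : Bool) (g : H b),
    (⟨b, g⟩ : Σ b : Bool, H b) ∈ ℓ → g ∉ (φ b).range) (b : Bool) (x : OO d ℓ) :
    (sig d ℓ hR b).symm x = sigFun d ℓ b x := rfl

/-- the canonical block structure -/
noncomputable def canon (b : Bool) :
    (d.set b × (Fin (ℓ.length + 1) × d.set (!b))) ≃ OO d ℓ where
  toFun q := (q.2.1, mk2 d b q.1 q.2.2)
  invFun p := (p.2 b, (p.1, p.2 (!b)))
  left_inv := by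
    rintro ⟨t, k, u⟩
    simp [mk2_apply_b, mk2_apply_nb]
  right_inv := by
    rintro ⟨k, v⟩
    exact Prod.ext rfl (vext d (mk2_apply_b d b _ _) (mk2_apply_nb d b _ _))

/-- block coordinates for side `b` -/
noncomputable def eqO (hR : ∀ (b : Bool) (g : H b),
    (⟨b, g⟩ : Σ b : Bool, H b) ∈ ℓ → g ∉ (φ b).range) (b : Bool) :
    (d.set b × (Fin (ℓ.length + 1) × d.set (!b))) ≃ OO d ℓ :=
  (canon d ℓ b).trans (sig d ℓ hR b)

end Blocks

section Action

variable (d : Monoid.PushoutI.NormalWord.Transversal φ) (ℓ : List (Σ b : Bool, H b))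
  (hR : ∀ (b : Bool) (g : H b), (⟨b, g⟩ : Σ b : Bool, H b) ∈ ℓ → g ∉ (φ b).range)

/-- the action of `H b` on `C × OO` -/
noncomputable def act (b : Bool) (a : H b) : C × OO d ℓ → C × OO d ℓ := fun x =>
  (decC d b (a * φ b x.1 * ((eqO d ℓ hR b).symm x.2).1),
   eqO d ℓ hR b (decT d b (a * φ b x.1 * ((eqO d ℓ hR b).symm x.2).1),
     ((eqO d ℓ hR b).symm x.2).2))

theorem act_apply_eqO (b : Bool) (a : H b) (c : C) (t : d.set b)
    (w : Fin (ℓ.length + 1) × d.set (!b)) :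
    act d ℓ hR b a (c, eqO d ℓ hR b (t, w)) =
      (decC d b (a * φ b c * t), eqO d ℓ hR b (decT d b (a * φ b c * t), w)) := by
  simp only [act, Equiv.symm_apply_apply]

theorem exists_eqO_form (b : Bool) (o : OO d ℓ) :
    ∃ t w, o = eqO d ℓ hR b (t, w) := by
  refine ⟨((eqO d ℓ hR b).symm o).1, ((eqO d ℓ hR b).symm o).2, ?_⟩
  rw [Prod.mk.eta, Equiv.apply_symm_apply]

theorem act_mul (b : Bool) (a a' : H b) (x : C × OO d ℓ) :
    act d ℓ hR b a (act d ℓ hR b a' x) = act d ℓ hR b (a * a') x := by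
  obtain ⟨c, o⟩ := x
  obtain ⟨t, w, rfl⟩ := exists_eqO_form d ℓ hR b o
  rw [act_apply_eqO, act_apply_eqO, act_apply_eqO]
  have hE : a * φ b (decC d b (a' * φ b c * t)) * (decT d b (a' * φ b c * t) : H b)
      = a * a' * φ b c * t := by
    rw [mul_assoc a, dec_spec]
    group
  rw [hE]

theorem act_one (b : Bool) (x : C × OO d ℓ) : act d ℓ hR b 1 x = x := by
  obtain ⟨c, o⟩ := x
  obtain ⟨t, w, rfl⟩ := exists_eqO_form d ℓ hR b o
  rw [act_apply_eqO, one_mul, decC_phi_t, decT_phi_t]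

/-- the homomorphism `H b →* Perm (C × OO)` -/
noncomputable def rho (b : Bool) : H b →* Equiv.Perm (C × OO d ℓ) where
  toFun a :=
    ⟨act d ℓ hR b a, act d ℓ hR b a⁻¹,
      fun x => by rw [act_mul, inv_mul_cancel, act_one],
      fun x => by rw [act_mul, mul_inv_cancel, act_one]⟩
  map_one' := Equiv.ext fun x => act_one d ℓ hR b x
  map_mul' a a' := Equiv.ext fun x => (act_mul d ℓ hR b a a' x).symm

theorem rho_apply (b : Bool) (a : H b) (x : C × OO d ℓ) :
    rho d ℓ hR b a x = act d ℓ hR b a x := rfl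

/-- the homomorphism `C →* Perm (C × OO)` -/
noncomputable def kap : C →* Equiv.Perm (C × OO d ℓ) where
  toFun c0 :=
    ⟨fun x => (c0 * x.1, x.2), fun x => (c0⁻¹ * x.1, x.2),
      fun x => by simp, fun x => by simp⟩
  map_one' := Equiv.ext fun x => by simp
  map_mul' c1 c2 := Equiv.ext fun x => by simp [mul_assoc]

theorem kap_apply (c0 : C) (x : C × OO d ℓ) :
    kap d ℓ c0 x = (c0 * x.1, x.2) := rfl

theorem compat : ∀ b, (rho d ℓ hR b).comp (φ b) = kap d ℓ := by
  intro b
  refine MonoidHom.ext fun c0 => Equiv.ext fun x => ?_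
  obtain ⟨c, o⟩ := x
  obtain ⟨t, w, rfl⟩ := exists_eqO_form d ℓ hR b o
  show act d ℓ hR b (φ b c0) _ = _
  rw [act_apply_eqO, ← map_mul, decC_phi_t, decT_phi_t]
  rfl

end Action

section Step

variable (d : Monoid.PushoutI.NormalWord.Transversal φ) (ℓ : List (Σ b : Bool, H b))
  (hR : ∀ (b : Bool) (g : H b), (⟨b, g⟩ : Σ b : Bool, H b) ∈ ℓ → g ∉ (φ b).range)

/-- the trajectory points -/
noncomputable def statePt (k : ℕ) (hk : k < ℓ.length + 1) : C × OO d ℓ :=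
  (hd d ℓ k, (⟨k, hk⟩, ones d))

theorem step (hchain : ℓ.Chain' fun l l' => l.fst ≠ l'.fst)
    {j : ℕ} {b : Bool} {g : H b} (hj : ℓ[j]? = some ⟨b, g⟩) (hjlt : j < ℓ.length) :
    act d ℓ hR b g (statePt d ℓ (j + 1) (by omega)) = statePt d ℓ j (by omega) := by
  have hisT : isT ℓ j b := ⟨g, hj⟩
  have hlab : ((lab d ℓ b j : H b)) ≠ 1 := lab_ne_one d ℓ hR hisT
  have hjlt1 : j + 1 < ℓ.length + 1 := by omega
  -- σ fixes the starting position
  have hfix : sigFun d ℓ b (⟨j + 1, hjlt1⟩, ones d) = (⟨j + 1, hjlt1⟩, ones d) := by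
    rw [sigFun]
    rw [dif_neg, dif_neg]
    · simp only [Nat.add_sub_cancel]
      rintro ⟨-, hT, h3⟩
      exact upd_ne_ones d (lab_ne_one d ℓ hR hT) h3.symm
    · rintro ⟨-, h2⟩
      exact isT_not_succ ℓ hchain hisT h2
  -- block coordinates of the starting position
  have hsymm : (eqO d ℓ hR b).symm ((⟨j + 1, hjlt1⟩, ones d) : OO d ℓ) =
      (⟨1, d.one_mem b⟩, (⟨j + 1, hjlt1⟩, ⟨1, d.one_mem (!b)⟩)) := by
    rw [eqO, Equiv.symm_trans_apply]
    have h1 : (sig d ℓ hR b).symm ((⟨j + 1, hjlt1⟩, ones d) : OO d ℓ)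
        = (⟨j + 1, hjlt1⟩, ones d) := hfix
    rw [h1]
    rfl
  have hform : ((⟨j + 1, hjlt1⟩, ones d) : OO d ℓ) =
      eqO d ℓ hR b (⟨1, d.one_mem b⟩, (⟨j + 1, hjlt1⟩, ⟨1, d.one_mem (!b)⟩)) := by
    rw [← hsymm, Equiv.apply_symm_apply]
  -- the decomposition of the new head
  have hhd : hd d ℓ j = decC d b (g * φ b (hd d ℓ (j + 1))) := by
    rw [hd, List.drop_eq_getElem_cons hjlt, (List.getElem?_eq_some_iff.1 hj).2, Fhd]
    rfl
  -- now compute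
  rw [statePt, statePt, hform, act_apply_eqO]
  have ht1 : ((⟨1, d.one_mem b⟩ : d.set b) : H b) = 1 := rfl
  rw [ht1, mul_one, ← hhd, ← lab_eq d ℓ hj]
  -- it remains to compute eqO at the new label
  congr 1
  rw [eqO, Equiv.trans_apply]
  have hcanon : canon d ℓ b ((lab d ℓ b j : d.set b), (⟨j + 1, hjlt1⟩, ⟨1, d.one_mem (!b)⟩))
      = (⟨j + 1, hjlt1⟩, upd d b (lab d ℓ b j)) := by
    show (_, mk2 d b _ _) = _
    rw [mk2_one]
  rw [hcanon, sig_apply, sigFun]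
  rw [dif_neg, dif_pos]
  · refine Prod.ext (Fin.ext ?_) rfl
    simp
  · refine ⟨Nat.succ_pos _, ?_, ?_⟩ <;> simp [hisT]
  · rintro ⟨h1, -⟩
    exact upd_ne_ones d hlab h1

theorem statePt_congr {k k' : ℕ} (h : k = k') (hk : k < ℓ.length + 1)
    (hk' : k' < ℓ.length + 1) : statePt d ℓ k hk = statePt d ℓ k' hk' := by
  subst h; rfl

/-- the product of the permutations of the letters in a list -/
noncomputable def permProd (L : List (Σ b : Bool, H b)) : Equiv.Perm (C × OO d ℓ) :=
  (L.map fun l => rho d ℓ hR l.1 l.2).prod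

theorem permProd_nil : permProd d ℓ hR [] = 1 := rfl

theorem permProd_cons (p : Σ b : Bool, H b) (L : List (Σ b : Bool, H b)) :
    permProd d ℓ hR (p :: L) = rho d ℓ hR p.1 p.2 * permProd d ℓ hR L := by
  rw [permProd, List.map_cons, List.prod_cons, permProd]

theorem permProd_drop (hchain : ℓ.Chain' fun l l' => l.fst ≠ l'.fst) :
    ∀ (i : ℕ), i ≤ ℓ.length →
      permProd d ℓ hR (ℓ.drop (ℓ.length - i)) (statePt d ℓ ℓ.length (by omega)) =
        statePt d ℓ (ℓ.length - i) (by omega) := by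
  intro i
  induction i with
  | zero => intro _; simp only [Nat.sub_zero, List.drop_length, permProd_nil]; rfl
  | succ n ih =>
    intro hn
    have hlt : ℓ.length - (n + 1) < ℓ.length := by omega
    have hdrop : ℓ.drop (ℓ.length - (n + 1)) =
        ℓ[ℓ.length - (n + 1)] :: ℓ.drop (ℓ.length - (n + 1) + 1) := List.drop_eq_getElem_cons hlt
    have hsucc : ℓ.length - (n + 1) + 1 = ℓ.length - n := by omega
    have hj : ℓ[ℓ.length - (n + 1)]? =
        some ⟨(ℓ[ℓ.length - (n + 1)]'hlt).1, (ℓ[ℓ.length - (n + 1)]'hlt).2⟩ := by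
      rw [List.getElem?_eq_getElem hlt]
      all_goals exact congrArg some (Sigma.eta _).symm
    rw [hdrop, permProd_cons, Equiv.Perm.mul_apply,
      show List.drop (ℓ.length - (n + 1) + 1) ℓ = List.drop (ℓ.length - n) ℓ from by
        rw [hsucc],
      ih (by omega), rho_apply]
    have hstep := step d ℓ hR hchain hj hlt
    rw [statePt_congr d ℓ hsucc _ (by omega)] at hstep
    exact hstep

end Step

section Final

/-- transport of permutation groups along an equivalence, as a hom -/
noncomputable def permCongrHom {α β : Type*} (e : α ≃ β) : Equiv.Perm α →* Equiv.Perm β where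
  toFun π := e.permCongr π
  map_one' := Equiv.ext fun x => by simp
  map_mul' π₁ π₂ := Equiv.ext fun x => by
    simp [Equiv.permCongr_apply, Equiv.Perm.mul_apply]

theorem main_result [∀ b, Finite (H b)] (hφ : ∀ b, Function.Injective (φ b)) :
    ∀ g : Monoid.PushoutI φ, g ≠ 1 →
    ∃ (P : Type) (_ : Group P) (f : Monoid.PushoutI φ →* P), Finite P ∧ f g ≠ 1 := by
  intro g hg
  obtain ⟨d⟩ := Monoid.PushoutI.NormalWord.transversal_nonempty φ hφ
  letI : ∀ b : Bool, DecidableEq (H b) := fun b => Classical.decEq _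
  set w : Monoid.PushoutI.NormalWord d := Monoid.PushoutI.NormalWord.equiv g with hwdef
  have hprod : w.prod = g := Monoid.PushoutI.NormalWord.equiv.left_inv g
  set ℓ : List (Σ b : Bool, H b) := w.toList with hldef
  have hR : ∀ (b : Bool) (gg : H b), (⟨b, gg⟩ : Σ b : Bool, H b) ∈ ℓ → gg ∉ (φ b).range :=
    fun b gg hm => set_notin_range d b gg (w.normalized b gg hm) (w.ne_one ⟨b, gg⟩ hm)
  have hchain : ℓ.Chain' fun l l' => l.fst ≠ l'.fst := w.chain_ne
  -- the homomorphism to a group of permutations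
  set Φ : Monoid.PushoutI φ →* Equiv.Perm (C × OO d ℓ) :=
    Monoid.PushoutI.lift (rho d ℓ hR) (kap d ℓ) (compat d ℓ hR) with hΦdef
  have hsplit : Φ g = kap d ℓ w.head * permProd d ℓ hR ℓ := by
    conv_lhs => rw [← hprod, Monoid.PushoutI.NormalWord.prod]
    rw [map_mul, Monoid.PushoutI.lift_base]
    congr 1
    rw [Monoid.CoprodI.Word.prod]
    rw [← MonoidHom.comp_apply, map_list_prod, List.map_map, permProd]
    first
    | rfl
    | congr 1
    | (congr 1;
       funext l;
       show Φ (Monoid.PushoutI.ofCoprodI (Monoid.CoprodI.of l.snd)) = _;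
       rw [Monoid.PushoutI.ofCoprodI_of, hΦdef, Monoid.PushoutI.lift_of])
  set x₀ : C × OO d ℓ := statePt d ℓ ℓ.length (by omega) with hx₀
  have heval : Φ g x₀ = (w.head * hd d ℓ 0, (⟨0, by omega⟩, ones d)) := by
    rw [hsplit, Equiv.Perm.mul_apply]
    have hP := permProd_drop d ℓ hR hchain ℓ.length (le_refl _)
    rw [show List.drop (ℓ.length - ℓ.length) ℓ = ℓ from by
      rw [Nat.sub_self, List.drop_zero]] at hP
    have hP' := hP.trans (statePt_congr d ℓ (Nat.sub_self ℓ.length) (by omega) (by omega))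
    rw [hx₀, hP', kap_apply]
    rfl
  have hx₀eq : x₀ = (hd d ℓ ℓ.length, (⟨ℓ.length, by omega⟩, ones d)) := rfl
  have hne : Φ g x₀ ≠ x₀ := by
    rw [heval, hx₀eq]
    by_cases hm : ℓ.length = 0
    · have hl : ℓ = [] := List.length_eq_zero_iff.1 hm
      have hgbase : g = Monoid.PushoutI.base φ w.head := by
        rw [← hprod, Monoid.PushoutI.NormalWord.prod]
        have h2 : w.toWord.prod = 1 := by
          rw [Monoid.CoprodI.Word.prod]
          have h3 : w.toWord.toList = [] := hl
          rw [h3]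
          rfl
        rw [h2, map_one, mul_one]
      have hw1 : w.head ≠ 1 := by
        intro h1
        exact hg (by rw [hgbase, h1, map_one])
      have hhd0 : hd d ℓ 0 = 1 := by rw [hd, hl]; rfl
      intro hEq
      have h4 := congrArg Prod.fst hEq
      simp only [hhd0, mul_one] at h4
      rw [hd_length] at h4
      exact hw1 h4
    · intro hEq
      have h4 := congrArg (fun z => (z.2.1 : Fin (ℓ.length + 1)).val) hEq
      simp only at h4
      exact hm h4.symm
  haveI : Finite C := Finite.of_injective (φ true) (hφ true)
  haveI : Finite (VT d) := by unfold VT; infer_instance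
  haveI : Finite (OO d ℓ) := by unfold OO; infer_instance
  obtain ⟨n, ⟨eF⟩⟩ := Finite.exists_equiv_fin (C × OO d ℓ)
  refine ⟨Equiv.Perm (Fin n), inferInstance, (permCongrHom eF).comp Φ, ?_, ?_⟩
  · infer_instance
  · intro h1
    apply hne
    have h2 := congrArg (fun π : Equiv.Perm (Fin n) => π (eF x₀)) h1
    simp only [MonoidHom.comp_apply, permCongrHom, MonoidHom.coe_mk, OneHom.coe_mk,
      Equiv.permCongr_apply, Equiv.symm_apply_apply, Equiv.Perm.coe_one, id_eq] at h2
    exact eF.injective h2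

end Final

end AmalgamRF

/-- An amalgamated free product of two finite groups over a common subgroup is
residually finite. -/
theorem amalgam_of_finite_groups_residually_finite
    (H : Bool → Type*) [∀ b, Group (H b)] [∀ b, Finite (H b)]
    (C : Type*) [Group C]
    (φ : ∀ b : Bool, C →* H b) (hφ : ∀ b, Function.Injective (φ b)) :
    ∀ g : PushoutI φ, g ≠ 1 →
      ∃ (P : Type) (_ : Group P) (f : PushoutI φ →* P), Finite P ∧ f g ≠ 1 :=
  AmalgamRF.main_result hφ
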